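/- Let β ∈ (0,1), m ∈ ℝ and σ ≥ 0. Then the following are equivalent: (i) every probability measure μ on ℝ with finite second moment, mean ∫ x dμ(x) = m and variance ∫ (x − m)² dμ(x) = σ² satisfies μ((−∞, 0]) ≥ 1 − β; (ii) √(1−β)·σ + √β·m ≤ 0. -/

import Mathlib

open MeasureTheory

lemma integrable_dirac' (f : ℝ → ℝ) (a : ℝ) : Integrable f (Measure.dirac a) :=
  (integrable_const (f a)).congr (ae_eq_dirac f).symm

lemma integral_two_point (p q a b : ℝ) (hp : 0 ≤ p) (hq : 0 ≤ q) (f : ℝ → ℝ) :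
    ∫ x, f x ∂(ENNReal.ofReal p • Measure.dirac a + ENNReal.ofReal q • Measure.dirac b)
      = p * f a + q * f b := by
  rw [integral_add_measure
      ((integrable_dirac' f a).smul_measure ENNReal.ofReal_ne_top)
      ((integrable_dirac' f b).smul_measure ENNReal.ofReal_ne_top),
    integral_smul_measure, integral_smul_measure, integral_dirac, integral_dirac,
    ENNReal.toReal_ofReal hp, ENNReal.toReal_ofReal hq, smul_eq_mul, smul_eq_mul]

set_option maxHeartbeats 1000000 in
lemma forward_dir (β m σ : ℝ) (hβ0 : 0 < β) (hβ1 : β < 1) (hσ : 0 ≤ σ)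
    (H : ∀ μ : Measure ℝ, IsProbabilityMeasure μ → MemLp id 2 μ →
      (∫ x, x ∂μ) = m → (∫ x, (x - m) ^ 2 ∂μ) = σ ^ 2 →
      ENNReal.ofReal (1 - β) ≤ μ (Set.Iic 0)) :
    Real.sqrt (1 - β) * σ + Real.sqrt β * m ≤ 0 := by
  by_contra hcon
  push_neg at hcon
  have hsβ : 0 < Real.sqrt β := Real.sqrt_pos.mpr hβ0
  have hsβ' : 0 < Real.sqrt (1 - β) := Real.sqrt_pos.mpr (by linarith)
  have h2 : Real.sqrt (1 - β) ^ 2 = 1 - β := Real.sq_sqrt (by linarith)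
  have h3 : Real.sqrt β ^ 2 = β := Real.sq_sqrt hβ0.le
  rcases eq_or_lt_of_le hσ with hσ0 | hσpos
  · -- σ = 0 : dirac at m, with m > 0
    have hm : 0 < m := by nlinarith
    have hmem : MemLp id 2 (Measure.dirac m) := by
      refine memLp_of_bounded (a := m) (b := m) ?_ measurable_id.aestronglyMeasurable 2
      filter_upwards [ae_eq_dirac (id : ℝ → ℝ)] with x hx
      simp only [id_eq, Function.const_apply] at hx
      simp [hx]
    have hmean : (∫ x, x ∂(Measure.dirac m)) = m := integral_dirac (fun x => x) m
    have hvar : (∫ x, (x - m) ^ 2 ∂(Measure.dirac m)) = σ ^ 2 := by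
      rw [integral_dirac (fun x => (x - m) ^ 2) m, ← hσ0]
      ring
    have hH := H (Measure.dirac m) (by infer_instance) hmem hmean hvar
    rw [Measure.dirac_apply' m measurableSet_Iic] at hH
    have hnm : m ∉ Set.Iic (0:ℝ) := by simp only [Set.mem_Iic, not_le]; linarith
    rw [Set.indicator_of_notMem hnm] at hH
    have := ENNReal.ofReal_eq_zero.mp (le_zero_iff.mp hH)
    linarith
  · -- σ > 0 : two-point distribution
    obtain ⟨D, hD_def⟩ : ∃ D : ℝ, D = m + σ * (Real.sqrt (1 - β) / Real.sqrt β) := ⟨_, rfl⟩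
    have hDm : m < D := by
      have h4 : 0 < σ * (Real.sqrt (1 - β) / Real.sqrt β) := by positivity
      linarith
    have hD0 : 0 < D := by
      have hβD : Real.sqrt β * D = Real.sqrt (1 - β) * σ + Real.sqrt β * m := by
        rw [hD_def]; field_simp; ring
      nlinarith
    obtain ⟨b, hb_def⟩ : ∃ b : ℝ, b = (max m 0 + D) / 2 := ⟨_, rfl⟩
    have hbm : m < b := by
      have h1 : m ≤ max m 0 := le_max_left m 0
      rw [hb_def]; linarith
    have hb0 : 0 < b := by
      have h1 : (0:ℝ) ≤ max m 0 := le_max_right m 0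
      rw [hb_def]; linarith
    have hbD : b < D := by
      have h1 : max m 0 < D := max_lt hDm hD0
      rw [hb_def]; linarith
    obtain ⟨s, hs_def⟩ : ∃ s : ℝ, s = b - m := ⟨_, rfl⟩
    have hs : 0 < s := by rw [hs_def]; linarith
    obtain ⟨p, hp_def⟩ : ∃ p : ℝ, p = σ ^ 2 / (s ^ 2 + σ ^ 2) := ⟨_, rfl⟩
    have hden : 0 < s ^ 2 + σ ^ 2 := by positivity
    have hp0 : 0 < p := by rw [hp_def]; positivity
    have hp1 : p < 1 := by
      rw [hp_def, div_lt_one hden]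
      nlinarith
    have hpβ : β < p := by
      have hsD : s < σ * (Real.sqrt (1 - β) / Real.sqrt β) := by
        rw [hs_def]
        rw [hD_def] at hbD
        linarith
      have h4 : s ^ 2 < (σ * (Real.sqrt (1 - β) / Real.sqrt β)) ^ 2 := by nlinarith
      have h5 : (σ * (Real.sqrt (1 - β) / Real.sqrt β)) ^ 2 = σ ^ 2 * (1 - β) / β := by
        rw [mul_pow, div_pow, h2, h3]; ring
      have h6 : β * (σ ^ 2 * (1 - β) / β) = (1 - β) * σ ^ 2 := by field_simp
      have hq : β * s ^ 2 < (1 - β) * σ ^ 2 := by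
        calc β * s ^ 2 < β * (σ ^ 2 * (1 - β) / β) :=
              mul_lt_mul_of_pos_left (h5 ▸ h4) hβ0
          _ = (1 - β) * σ ^ 2 := h6
      rw [hp_def, lt_div_iff₀ hden]
      nlinarith
    obtain ⟨a, ha_def⟩ : ∃ a : ℝ, a = m - σ ^ 2 / s := ⟨_, rfl⟩
    obtain ⟨μ, hμ_def⟩ : ∃ μ : Measure ℝ,
        μ = ENNReal.ofReal (1 - p) • Measure.dirac a + ENNReal.ofReal p • Measure.dirac b :=
      ⟨_, rfl⟩
    have habset : μ ({a, b}ᶜ) = 0 := by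
      rw [hμ_def, Measure.add_apply, Measure.smul_apply, Measure.smul_apply,
        Measure.dirac_apply' a (MeasurableSet.compl (by measurability)),
        Measure.dirac_apply' b (MeasurableSet.compl (by measurability))]
      simp
    have hprob : IsProbabilityMeasure μ := by
      constructor
      rw [hμ_def, Measure.add_apply, Measure.smul_apply, Measure.smul_apply]
      simp only [Measure.dirac_apply_of_mem (Set.mem_univ a),
        Measure.dirac_apply_of_mem (Set.mem_univ b), smul_eq_mul, mul_one]
      rw [← ENNReal.ofReal_add (by linarith) hp0.le]
      norm_num
    have hmem : MemLp id 2 μ := by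
      refine memLp_of_bounded (a := min a b) (b := max a b) ?_
        measurable_id.aestronglyMeasurable 2
      rw [ae_iff]
      refine measure_mono_null ?_ habset
      intro x hx
      simp only [Set.mem_setOf_eq, Set.mem_Icc, id_eq, not_and_or, not_le] at hx
      simp only [Set.mem_compl_iff, Set.mem_insert_iff, Set.mem_singleton_iff]
      rintro (rfl | rfl)
      · rcases hx with h | h
        · exact absurd (min_le_left x b) (not_le.mpr h)
        · exact absurd (le_max_left x b) (not_le.mpr h)
      · rcases hx with h | h
        · exact absurd (min_le_right a x) (not_le.mpr h)
        · exact absurd (le_max_right a x) (not_le.mpr h)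
    have hbm' : b - m ≠ 0 := by intro h; rw [hs_def] at hs; linarith
    have hb2 : b = m + s := by rw [hs_def]; ring
    have hs0 : s ≠ 0 := hs.ne'
    have hmean : (∫ x, x ∂μ) = m := by
      rw [hμ_def, integral_two_point (1 - p) p a b (by linarith) hp0.le (fun x => x),
        ha_def, hb2, hp_def]
      field_simp
      ring
    have hvar : (∫ x, (x - m) ^ 2 ∂μ) = σ ^ 2 := by
      rw [hμ_def, integral_two_point (1 - p) p a b (by linarith) hp0.le (fun x => (x - m) ^ 2),
        ha_def, hb2, hp_def]
      field_simp
      ring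
    have hH := H μ hprob hmem hmean hvar
    have hIic : μ (Set.Iic 0) ≤ ENNReal.ofReal (1 - p) := by
      rw [hμ_def, Measure.add_apply, Measure.smul_apply, Measure.smul_apply,
        Measure.dirac_apply' b measurableSet_Iic]
      have hbn : b ∉ Set.Iic (0:ℝ) := by simp only [Set.mem_Iic, not_le]; linarith
      rw [Set.indicator_of_notMem hbn]
      simp only [smul_eq_mul, mul_zero, add_zero]
      calc ENNReal.ofReal (1 - p) * Measure.dirac a (Set.Iic 0)
          ≤ ENNReal.ofReal (1 - p) * 1 := by gcongr; exact prob_le_one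
        _ = ENNReal.ofReal (1 - p) := mul_one _
    have hle : ENNReal.ofReal (1 - β) ≤ ENNReal.ofReal (1 - p) := le_trans hH hIic
    rw [ENNReal.ofReal_le_ofReal_iff (by linarith)] at hle
    linarith


lemma cantelli_dir (β m σ : ℝ) (hβ0 : 0 < β) (hβ1 : β < 1) (hσ : 0 ≤ σ)
    (h : Real.sqrt (1 - β) * σ + Real.sqrt β * m ≤ 0)
    (μ : Measure ℝ) (hprob : IsProbabilityMeasure μ) (hL2 : MemLp id 2 μ)
    (hm : (∫ x, x ∂μ) = m) (hv : (∫ x, (x - m) ^ 2 ∂μ) = σ ^ 2) :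
    ENNReal.ofReal (1 - β) ≤ μ (Set.Iic 0) := by
  have hsβ : 0 < Real.sqrt β := Real.sqrt_pos.mpr hβ0
  have hsβ' : 0 < Real.sqrt (1 - β) := Real.sqrt_pos.mpr (by linarith)
  have hsub : MemLp (fun x => x - m) 2 μ := hL2.sub (memLp_const m)
  have hint_sq : Integrable (fun x => (x - m) ^ 2) μ := hsub.integrable_sq
  have hint_id : Integrable (id : ℝ → ℝ) μ := hL2.integrable one_le_two
  have hint_sub : Integrable (fun x => x - m) μ := hint_id.sub (integrable_const m)
  have hmean0 : (∫ x, (x - m) ∂μ) = 0 := by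
    have h' := integral_sub hint_id (integrable_const m)
    simp only [id_eq] at h'
    rw [h', hm, integral_const]
    simp
  rcases eq_or_lt_of_le hσ with hσ0 | hσpos
  · -- σ = 0 : X = m a.e. and m ≤ 0
    have hm0 : m ≤ 0 := by nlinarith
    have hae : ∀ᵐ x ∂μ, (x - m) ^ 2 = 0 := by
      have h0 : (∫ x, (x - m) ^ 2 ∂μ) = 0 := by rw [hv, ← hσ0]; ring
      exact ((integral_eq_zero_iff_of_nonneg (fun x => sq_nonneg _) hint_sq).mp h0)
    have hIoi : μ (Set.Ioi 0) = 0 := by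
      rw [← le_zero_iff]
      calc μ (Set.Ioi 0) ≤ μ {x | ¬ (x - m) ^ 2 = 0} := by
            apply measure_mono
            intro x hx
            simp only [Set.mem_setOf_eq]
            intro hc
            have : x = m := by nlinarith
            simp only [Set.mem_Ioi] at hx
            linarith
        _ = 0 := hae
    have h1 : μ (Set.Iic 0) = 1 := by
      rw [← Set.compl_Ioi, measure_compl measurableSet_Ioi (measure_ne_top μ _), hIoi,
        measure_univ]
      simp
    rw [h1]
    exact ENNReal.ofReal_le_one.mpr (by linarith)
  · -- σ > 0
    set t : ℝ := -m with ht_def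
    have ht : Real.sqrt (1 - β) * σ ≤ Real.sqrt β * t := by simp only [ht_def]; linarith
    have htpos : 0 < t := by nlinarith
    have key : (1 - β) * σ ^ 2 ≤ β * t ^ 2 := by
      have h1 := mul_le_mul ht ht (by positivity) (by positivity)
      have h2 : Real.sqrt (1 - β) ^ 2 = 1 - β := Real.sq_sqrt (by linarith)
      have h3 : Real.sqrt β ^ 2 = β := Real.sq_sqrt hβ0.le
      nlinarith
    set u : ℝ := σ ^ 2 / t with hu_def
    have hu : 0 < u := by positivity
    have hfeq : (fun x => (x - m + u) ^ 2)
        = fun x => (x - m) ^ 2 + (2 * u) * (x - m) + u ^ 2 := by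
      funext x; ring
    have hint_f : Integrable (fun x => (x - m + u) ^ 2) μ := by
      rw [hfeq]
      exact (hint_sq.add (hint_sub.const_mul (2 * u))).add (integrable_const _)
    have hint_cm : Integrable (fun x => 2 * u * (x - m)) μ := hint_sub.const_mul (2 * u)
    have hint_fg : Integrable (fun x => (x - m) ^ 2 + 2 * u * (x - m)) μ := hint_sq.add hint_cm
    have hintegral_f : (∫ x, (x - m + u) ^ 2 ∂μ) = σ ^ 2 + u ^ 2 := by
      rw [hfeq, integral_add hint_fg (integrable_const _),
        integral_add hint_sq hint_cm, integral_const_mul _ _, hmean0, hv,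
        integral_const]
      simp
    have markov := mul_meas_ge_le_integral_of_nonneg
      (ae_of_all μ (fun x => sq_nonneg (x - m + u))) hint_f ((t + u) ^ 2)
    rw [hintegral_f] at markov
    have hsubset : Set.Ioi (0 : ℝ) ⊆ {x | (t + u) ^ 2 ≤ (x - m + u) ^ 2} := by
      intro x hx
      simp only [Set.mem_Ioi] at hx
      simp only [Set.mem_setOf_eq, ht_def]
      nlinarith
    have hmono : (μ (Set.Ioi 0)).toReal ≤ (μ {x | (t + u) ^ 2 ≤ (x - m + u) ^ 2}).toReal :=
      ENNReal.toReal_mono (measure_ne_top μ _) (measure_mono hsubset)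
    have hμβ : (μ (Set.Ioi 0)).toReal ≤ β := by
      have htu : (0:ℝ) < (t + u) ^ 2 := by positivity
      have hchain : (t + u) ^ 2 * (μ (Set.Ioi 0)).toReal ≤ σ ^ 2 + u ^ 2 := by
        rw [measureReal_def] at markov
        nlinarith
      -- σ² + u² ≤ β (t+u)²  with u = σ²/t
      have hub : σ ^ 2 + u ^ 2 ≤ β * (t + u) ^ 2 := by
        have hut : u * t = σ ^ 2 := by
          rw [hu_def, div_mul_cancel₀ _ htpos.ne']
        nlinarith [sq_nonneg (t + u), sq_nonneg u, mul_pos htpos hu]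
      nlinarith [ENNReal.toReal_nonneg (a := μ (Set.Ioi 0))]
    have hIoi : μ (Set.Ioi 0) ≤ ENNReal.ofReal β := by
      rw [← ENNReal.ofReal_toReal (measure_ne_top μ (Set.Ioi 0))]
      exact ENNReal.ofReal_le_ofReal hμβ
    have hc : μ (Set.Iic 0) = 1 - μ (Set.Ioi 0) := by
      rw [← Set.compl_Ioi, measure_compl measurableSet_Ioi (measure_ne_top μ _), measure_univ]
    rw [hc]
    calc ENNReal.ofReal (1 - β) = 1 - ENNReal.ofReal β := by
          rw [ENNReal.ofReal_sub _ hβ0.le, ENNReal.ofReal_one]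
      _ ≤ 1 - μ (Set.Ioi 0) := tsub_le_tsub_left hIoi 1


/-- Theorem (distributionally robust chance constraint, Calafiore–El Ghaoui):
for `β ∈ (0,1)`, `m ∈ ℝ` and `σ ≥ 0`, every probability measure on `ℝ` with finite
second moment, mean `m` and variance `σ²` satisfies `μ((-∞,0]) ≥ 1 - β` if and only
if `√(1-β)·σ + √β·m ≤ 0`. -/
theorem distributionally_robust_chance_constraint_iff
    (β m σ : ℝ) (hβ : β ∈ Set.Ioo (0 : ℝ) 1) (hσ : 0 ≤ σ) :
    (∀ μ : Measure ℝ, IsProbabilityMeasure μ → MemLp id 2 μ →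
      (∫ x, x ∂μ) = m → (∫ x, (x - m) ^ 2 ∂μ) = σ ^ 2 →
      ENNReal.ofReal (1 - β) ≤ μ (Set.Iic 0)) ↔
    Real.sqrt (1 - β) * σ + Real.sqrt β * m ≤ 0 := by
  obtain ⟨hβ0, hβ1⟩ := hβ
  constructor
  · exact forward_dir β m σ hβ0 hβ1 hσ
  · intro h μ hprob hL2 hm hv
    exact cantelli_dir β m σ hβ0 hβ1 hσ h μ hprob hL2 hm hv
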